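/- Let G be a prime (P_6, bull, gem)-free graph containing five pairwise disjoint vertex subsets U_1,...,U_5 (indices mod 5) such that U_i is anticomplete to U_{i-2} ∪ U_{i+2}, each U_i contains a vertex u_i complete to U_{i-1} ∪ U_{i+1}, and U_1 ∪ ... ∪ U_5 is maximal with these properties. Then each U_i is a stable set. -/

import Mathlib

/-- The bull: vertices `a,b,c,d,e = 0,1,2,3,4` with edges `ab, bc, cd, be, ce`. -/
def bull : SimpleGraph (Fin 5) :=
  SimpleGraph.fromRel (fun a b => (a, b) ∈
    ([(0,1),(1,2),(2,3),(1,4),(2,4)] : List (Fin 5 × Fin 5)))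

/-- The gem: a path `v₁v₂v₃v₄ = 0,1,2,3` plus a dominating vertex `v₅ = 4`. -/
def gem : SimpleGraph (Fin 5) :=
  SimpleGraph.fromRel (fun a b => (a, b) ∈
    ([(0,1),(1,2),(2,3),(4,0),(4,1),(4,2),(4,3)] : List (Fin 5 × Fin 5)))

/-- `G` contains no induced subgraph isomorphic to `F`. -/
def InducedFree {α β : Type*} (F : SimpleGraph α) (G : SimpleGraph β) : Prop :=
  ¬ ∃ f : α ↪ β, ∀ a b : α, G.Adj (f a) (f b) ↔ F.Adj a b

/-- A homogeneous set: every vertex outside `S` is complete or anticomplete to `S`. -/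
def IsHomog {V : Type*} (G : SimpleGraph V) (S : Set V) : Prop :=
  ∀ v ∉ S, (∀ s ∈ S, G.Adj v s) ∨ (∀ s ∈ S, ¬ G.Adj v s)

/-- A graph is prime if it has no proper homogeneous set. -/
def IsPrime {V : Type*} (G : SimpleGraph V) : Prop :=
  ¬ ∃ S : Set V, IsHomog G S ∧ 2 ≤ S.ncard ∧ S ≠ Set.univ

/-- The structural property of the 5-tuple `(U₁,…,U₅)` (indices mod 5): the `Uᵢ` are
pairwise disjoint, `Uᵢ` is anticomplete to `U_{i+2} ∪ U_{i-2}`, and each `Uᵢ`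
contains a vertex complete to `U_{i-1} ∪ U_{i+1}`. -/
def BlownUpC5 {V : Type*} (G : SimpleGraph V) (U : Fin 5 → Set V) : Prop :=
  (∀ i j : Fin 5, i ≠ j → Disjoint (U i) (U j)) ∧
  (∀ i : Fin 5, ∀ a ∈ U i, ∀ b, b ∈ U (i + 2) ∪ U (i + 3) → ¬ G.Adj a b) ∧
  (∀ i : Fin 5, ∃ u ∈ U i, ∀ b, b ∈ U (i + 1) ∪ U (i + 4) → G.Adj u b)


instance : DecidableRel bull.Adj := fun a b =>
  decidable_of_iff _ (SimpleGraph.fromRel_adj _ a b).symm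

instance : DecidableRel gem.Adj := fun a b =>
  decidable_of_iff _ (SimpleGraph.fromRel_adj _ a b).symm

lemma no_bull {V : Type*} {G : SimpleGraph V} (hbull : InducedFree bull G)
    (p0 p1 p2 p3 p4 : V)
    (e01 : G.Adj p0 p1) (e12 : G.Adj p1 p2) (e23 : G.Adj p2 p3) (e14 : G.Adj p1 p4)
    (e24 : G.Adj p2 p4)
    (n02 : ¬G.Adj p0 p2) (n03 : ¬G.Adj p0 p3) (n04 : ¬G.Adj p0 p4) (n13 : ¬G.Adj p1 p3)
    (n34 : ¬G.Adj p3 p4)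
    (h02 : p0 ≠ p2) (h03 : p0 ≠ p3) (h04 : p0 ≠ p4) (h13 : p1 ≠ p3) (h34 : p3 ≠ p4) : False := by
  have h01 := e01.ne; have h12 := e12.ne; have h23 := e23.ne
  have h14 := e14.ne; have h24 := e24.ne
  apply hbull
  refine ⟨⟨![p0,p1,p2,p3,p4], ?_⟩, ?_⟩
  · intro i j hij
    fin_cases i <;> fin_cases j <;> simp_all
  · intro i j
    fin_cases i <;> fin_cases j <;>
      simp only [Function.Embedding.coeFn_mk, Matrix.cons_val_zero, Matrix.cons_val_one,
        Matrix.head_cons, Matrix.cons_val_two, Matrix.tail_cons, Matrix.cons_val_three,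
        Matrix.cons_val_four, Matrix.head_fin_const, Fin.isValue] <;>
      first
        | exact iff_of_true e01 (by decide)
        | exact iff_of_true e12 (by decide)
        | exact iff_of_true e23 (by decide)
        | exact iff_of_true e14 (by decide)
        | exact iff_of_true e24 (by decide)
        | exact iff_of_true e01.symm (by decide)
        | exact iff_of_true e12.symm (by decide)
        | exact iff_of_true e23.symm (by decide)
        | exact iff_of_true e14.symm (by decide)
        | exact iff_of_true e24.symm (by decide)
        | exact iff_of_false G.irrefl (by decide)
        | exact iff_of_false n02 (by decide)
        | exact iff_of_false n03 (by decide)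
        | exact iff_of_false n04 (by decide)
        | exact iff_of_false n13 (by decide)
        | exact iff_of_false n34 (by decide)
        | exact iff_of_false (fun h => n02 h.symm) (by decide)
        | exact iff_of_false (fun h => n03 h.symm) (by decide)
        | exact iff_of_false (fun h => n04 h.symm) (by decide)
        | exact iff_of_false (fun h => n13 h.symm) (by decide)
        | exact iff_of_false (fun h => n34 h.symm) (by decide)

lemma no_gem {V : Type*} {G : SimpleGraph V} (hgem : InducedFree gem G)
    (p0 p1 p2 p3 p4 : V)
    (e01 : G.Adj p0 p1) (e12 : G.Adj p1 p2) (e23 : G.Adj p2 p3)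
    (e40 : G.Adj p4 p0) (e41 : G.Adj p4 p1) (e42 : G.Adj p4 p2) (e43 : G.Adj p4 p3)
    (n02 : ¬G.Adj p0 p2) (n03 : ¬G.Adj p0 p3) (n13 : ¬G.Adj p1 p3)
    (h02 : p0 ≠ p2) (h03 : p0 ≠ p3) (h13 : p1 ≠ p3) : False := by
  have h01 := e01.ne; have h12 := e12.ne; have h23 := e23.ne
  have h40 := e40.ne; have h41 := e41.ne; have h42 := e42.ne; have h43 := e43.ne
  apply hgem
  refine ⟨⟨![p0,p1,p2,p3,p4], ?_⟩, ?_⟩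
  · intro i j hij
    fin_cases i <;> fin_cases j <;> simp_all
  · intro i j
    fin_cases i <;> fin_cases j <;>
      simp only [Function.Embedding.coeFn_mk, Matrix.cons_val_zero, Matrix.cons_val_one,
        Matrix.head_cons, Matrix.cons_val_two, Matrix.tail_cons, Matrix.cons_val_three,
        Matrix.cons_val_four, Matrix.head_fin_const, Fin.isValue] <;>
      first
        | exact iff_of_true e01 (by decide)
        | exact iff_of_true e12 (by decide)
        | exact iff_of_true e23 (by decide)
        | exact iff_of_true e40 (by decide)
        | exact iff_of_true e41 (by decide)
        | exact iff_of_true e42 (by decide)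
        | exact iff_of_true e43 (by decide)
        | exact iff_of_true e01.symm (by decide)
        | exact iff_of_true e12.symm (by decide)
        | exact iff_of_true e23.symm (by decide)
        | exact iff_of_true e40.symm (by decide)
        | exact iff_of_true e41.symm (by decide)
        | exact iff_of_true e42.symm (by decide)
        | exact iff_of_true e43.symm (by decide)
        | exact iff_of_false G.irrefl (by decide)
        | exact iff_of_false n02 (by decide)
        | exact iff_of_false n03 (by decide)
        | exact iff_of_false n13 (by decide)
        | exact iff_of_false (fun h => n02 h.symm) (by decide)
        | exact iff_of_false (fun h => n03 h.symm) (by decide)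
        | exact iff_of_false (fun h => n13 h.symm) (by decide)

lemma config {V : Type*} {G : SimpleGraph V} (hbull : InducedFree bull G)
    (hgem : InducedFree gem G) (a b u2 u3 u4 u5 v : V)
    (eab : G.Adj a b) (eau2 : G.Adj a u2) (eau5 : G.Adj a u5) (ebu2 : G.Adj b u2) (ebu5 : G.Adj b u5) (e23u : G.Adj u2 u3) (e34u : G.Adj u3 u4) (e45u : G.Adj u4 u5) (eva : G.Adj v a)
    (nvb : ¬G.Adj v b) (nau3 : ¬G.Adj a u3) (nau4 : ¬G.Adj a u4) (nbu3 : ¬G.Adj b u3) (nbu4 : ¬G.Adj b u4) (n24u : ¬G.Adj u2 u4) (n25u : ¬G.Adj u2 u5) (n35u : ¬G.Adj u3 u5)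
    (qvb : v ≠ b) (qau3 : a ≠ u3) (qau4 : a ≠ u4) (qbu3 : b ≠ u3) (qbu4 : b ≠ u4) (q24u : u2 ≠ u4) (q25u : u2 ≠ u5) (q35u : u3 ≠ u5) (qv2 : v ≠ u2) (qv3 : v ≠ u3) (qv4 : v ≠ u4) (qv5 : v ≠ u5)
    : G.Adj v u2 ∧ G.Adj v u5 ∧ ¬G.Adj v u3 ∧ ¬G.Adj v u4 := by
  by_cases h2 : G.Adj v u2 <;> by_cases h3 : G.Adj v u3 <;>
    by_cases h4 : G.Adj v u4 <;> by_cases h5 : G.Adj v u5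
  · exact (no_gem hgem a u2 u3 u4 v eau2 e23u e34u eva h2 h3 h4 nau3 nau4 n24u qau3 qau4 q24u).elim
  · exact (no_gem hgem a u2 u3 u4 v eau2 e23u e34u eva h2 h3 h4 nau3 nau4 n24u qau3 qau4 q24u).elim
  · exact (no_bull hbull b u2 u3 u4 v ebu2 e23u e34u h2.symm h3.symm nbu3 nbu4 (fun h => nvb h.symm) n24u (fun h => h4 h.symm) qbu3 qbu4 qvb.symm q24u qv4.symm).elim
  · exact (no_bull hbull b u2 u3 u4 v ebu2 e23u e34u h2.symm h3.symm nbu3 nbu4 (fun h => nvb h.symm) n24u (fun h => h4 h.symm) qbu3 qbu4 qvb.symm q24u qv4.symm).elim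
  · exact (no_bull hbull b u5 u4 u3 v ebu5 e45u.symm e34u.symm h5.symm h4.symm nbu4 nbu3 (fun h => nvb h.symm) (fun h => n35u h.symm) (fun h => h3 h.symm) qbu4 qbu3 qvb.symm q35u.symm qv3.symm).elim
  · exact (no_bull hbull u3 u2 a u5 v e23u.symm eau2.symm eau5 h2.symm eva.symm (fun h => nau3 h.symm) n35u (fun h => h3 h.symm) n25u (fun h => h5 h.symm) qau3.symm q35u qv3.symm q25u qv5.symm).elim
  · exact ⟨h2, h5, h3, h4⟩
  · exact (no_bull hbull u3 u2 a u5 v e23u.symm eau2.symm eau5 h2.symm eva.symm (fun h => nau3 h.symm) n35u (fun h => h3 h.symm) n25u (fun h => h5 h.symm) qau3.symm q35u qv3.symm q25u qv5.symm).elim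
  · exact (no_gem hgem a u5 u4 u3 v eau5 e45u.symm e34u.symm eva h5 h4 h3 nau4 nau3 (fun h => n35u h.symm) qau4 qau3 q35u.symm).elim
  · exact (no_bull hbull u2 u3 u4 u5 v e23u e34u e45u h3.symm h4.symm n24u n25u (fun h => h2 h.symm) n35u (fun h => h5 h.symm) q24u q25u qv2.symm q35u qv5.symm).elim
  · exact (no_bull hbull u2 a u5 u4 v eau2.symm eau5 e45u.symm eva.symm h5.symm n25u n24u (fun h => h2 h.symm) nau4 (fun h => h4 h.symm) q25u q24u qv2.symm qau4 qv4.symm).elim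
  · exact (no_bull hbull u4 u5 a v b e45u eau5.symm eva.symm ebu5.symm eab (fun h => nau4 h.symm) (fun h => h4 h.symm) (fun h => nbu4 h.symm) (fun h => h5 h.symm) nvb qau4.symm qv4.symm qbu4.symm qv5.symm qvb).elim
  · exact (no_bull hbull b u5 u4 u3 v ebu5 e45u.symm e34u.symm h5.symm h4.symm nbu4 nbu3 (fun h => nvb h.symm) (fun h => n35u h.symm) (fun h => h3 h.symm) qbu4 qbu3 qvb.symm q35u.symm qv3.symm).elim
  · exact (no_bull hbull u3 u2 a v b e23u.symm eau2.symm eva.symm ebu2.symm eab (fun h => nau3 h.symm) (fun h => h3 h.symm) (fun h => nbu3 h.symm) (fun h => h2 h.symm) nvb qau3.symm qv3.symm qbu3.symm qv2.symm qvb).elim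
  · exact (no_bull hbull u2 a u5 u4 v eau2.symm eau5 e45u.symm eva.symm h5.symm n25u n24u (fun h => h2 h.symm) nau4 (fun h => h4 h.symm) q25u q24u qv2.symm qau4 qv4.symm).elim
  · exact (no_bull hbull u3 u2 a v b e23u.symm eau2.symm eva.symm ebu2.symm eab (fun h => nau3 h.symm) (fun h => h3 h.symm) (fun h => nbu3 h.symm) (fun h => h2 h.symm) nvb qau3.symm qv3.symm qbu3.symm qv2.symm qvb).elim


lemma key_lemma {V : Type*} (G : SimpleGraph V)
    (hbull : InducedFree bull G) (hgem : InducedFree gem G)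
    (U : Fin 5 → Set V) (hU : BlownUpC5 G U)
    (hmax : ∀ U' : Fin 5 → Set V, (∀ i, U i ⊆ U' i) → BlownUpC5 G U' →
      (⋃ i, U' i) = (⋃ i, U i)) :
    ∀ i : Fin 5, ∀ a ∈ U i, ∀ b ∈ U i, G.Adj a b → ∀ v ∉ U i, G.Adj v a → G.Adj v b := by
  intro i a ha b hb hab v hvUi hva
  by_contra hvb
  obtain ⟨hdisj, hanti, hwit⟩ := hU
  have I1 : ∀ j : Fin 5, j + 1 + 1 = j + 2 := by decide
  have I2 : ∀ j : Fin 5, j + 1 + 4 = j := by decide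
  have I3 : ∀ j : Fin 5, j + 2 + 1 = j + 3 := by decide
  have I4 : ∀ j : Fin 5, j + 2 + 4 = j + 1 := by decide
  have I5 : ∀ j : Fin 5, j + 3 + 1 = j + 4 := by decide
  have I6 : ∀ j : Fin 5, j + 3 + 4 = j + 2 := by decide
  have I7 : ∀ j : Fin 5, j + 4 + 1 = j := by decide
  have I8 : ∀ j : Fin 5, j + 4 + 4 = j + 3 := by decide
  obtain ⟨u2, hu2, hc2⟩ := hwit (i+1)
  obtain ⟨u3, hu3, hc3⟩ := hwit (i+2)
  obtain ⟨u4, hu4, hc4⟩ := hwit (i+3)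
  obtain ⟨u5, hu5, hc5⟩ := hwit (i+4)
  simp only [I1, I2, I3, I4, I5, I6, I7, I8] at hc2 hc3 hc4 hc5
  -- hc2 : complete to U(i+2) ∪ U i ; hc3 : U(i+3) ∪ U(i+1) ;
  -- hc4 : U(i+4) ∪ U(i+2) ; hc5 : U i ∪ U(i+3)
  have anti : ∀ j k : Fin 5, (k = j + 2 ∨ k = j + 3) →
      ∀ x ∈ U j, ∀ y ∈ U k, ¬ G.Adj x y := by
    intro j k hk x hx y hy
    refine hanti j x hx y ?_
    rcases hk with h | h
    · exact Or.inl (h ▸ hy)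
    · exact Or.inr (h ▸ hy)
  have A12 : ∀ j : Fin 5, j + 4 = (j + 1) + 3 := by decide
  have A13 : ∀ j : Fin 5, j + 3 = (j + 1) + 2 := by decide
  have A24 : ∀ j : Fin 5, j + 4 = (j + 2) + 2 := by decide
  have A40 : ∀ j : Fin 5, j = (j + 3) + 2 := by decide
  have A41 : ∀ j : Fin 5, j + 1 = (j + 4) + 2 := by decide
  -- basic adjacencies
  have eab : G.Adj a b := hab
  have eau2 : G.Adj a u2 := (hc2 a (Or.inr ha)).symm
  have ebu2 : G.Adj b u2 := (hc2 b (Or.inr hb)).symm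
  have eau5 : G.Adj a u5 := (hc5 a (Or.inl ha)).symm
  have ebu5 : G.Adj b u5 := (hc5 b (Or.inl hb)).symm
  have e45u : G.Adj u4 u5 := (hc5 u4 (Or.inr hu4)).symm
  have e23u : G.Adj u2 u3 := hc2 u3 (Or.inl hu3)
  have nau3 : ¬G.Adj a u3 := anti i (i+2) (Or.inl rfl) a ha u3 hu3
  have nau4 : ¬G.Adj a u4 := anti i (i+3) (Or.inr rfl) a ha u4 hu4
  have nbu3 : ¬G.Adj b u3 := anti i (i+2) (Or.inl rfl) b hb u3 hu3
  have nbu4 : ¬G.Adj b u4 := anti i (i+3) (Or.inr rfl) b hb u4 hu4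
  have n25u : ¬G.Adj u2 u5 := anti (i+1) (i+4) (Or.inr (A12 i)) u2 hu2 u5 hu5
  have n24u : ¬G.Adj u2 u4 := anti (i+1) (i+3) (Or.inl (A13 i)) u2 hu2 u4 hu4
  have n35u : ¬G.Adj u3 u5 := anti (i+2) (i+4) (Or.inl (A24 i)) u3 hu3 u5 hu5
  have qvb : v ≠ b := fun h => hvUi (h ▸ hb)
  have D : ∀ j k : Fin 5, j ≠ k → ∀ x ∈ U j, ∀ y ∈ U k, x ≠ y := by
    intro j k hjk x hx y hy
    exact (hdisj j k hjk).ne_of_mem hx hy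
  have d02' : ∀ j : Fin 5, j ≠ j + 2 := by decide
  have d03' : ∀ j : Fin 5, j ≠ j + 3 := by decide
  have d13' : ∀ j : Fin 5, j + 1 ≠ j + 3 := by decide
  have d14' : ∀ j : Fin 5, j + 1 ≠ j + 4 := by decide
  have d24' : ∀ j : Fin 5, j + 2 ≠ j + 4 := by decide
  have d02 := d02' i
  have d03 := d03' i
  have d13 := d13' i
  have d14 := d14' i
  have d24 := d24' i
  have qau3 : a ≠ u3 := D i (i+2) d02 a ha u3 hu3
  have qau4 : a ≠ u4 := D i (i+3) d03 a ha u4 hu4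
  have qbu3 : b ≠ u3 := D i (i+2) d02 b hb u3 hu3
  have qbu4 : b ≠ u4 := D i (i+3) d03 b hb u4 hu4
  have q24u : u2 ≠ u4 := D (i+1) (i+3) d13 u2 hu2 u4 hu4
  have q25u : u2 ≠ u5 := D (i+1) (i+4) d14 u2 hu2 u5 hu5
  have q35u : u3 ≠ u5 := D (i+2) (i+4) d24 u3 hu3 u5 hu5
  have qv2 : v ≠ u2 := fun h => hvb (by rw [h]; exact ebu2.symm)
  have qv5 : v ≠ u5 := fun h => hvb (by rw [h]; exact ebu5.symm)
  have qv3 : v ≠ u3 := fun h => nau3 (h ▸ hva).symm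
  have qv4 : v ≠ u4 := fun h => nau4 (h ▸ hva).symm
  -- locate v
  by_cases hv2m : v ∈ U (i+2)
  · exact anti i (i+2) (Or.inl rfl) a ha v hv2m hva.symm
  by_cases hv3m : v ∈ U (i+3)
  · exact anti i (i+3) (Or.inr rfl) a ha v hv3m hva.symm
  by_cases hv1m : v ∈ U (i+1)
  · exact no_bull hbull v a u5 u4 b hva eau5 e45u.symm hab ebu5.symm
      (anti (i+1) (i+4) (Or.inr (A12 i)) v hv1m u5 hu5)
      (anti (i+1) (i+3) (Or.inl (A13 i)) v hv1m u4 hu4)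
      hvb nau4 (fun h => nbu4 h.symm)
      (D (i+1) (i+4) d14 v hv1m u5 hu5)
      (D (i+1) (i+3) d13 v hv1m u4 hu4)
      qvb qau4 qbu4.symm
  by_cases hv4m : v ∈ U (i+4)
  · exact no_bull hbull v a u2 u3 b hva eau2 e23u hab ebu2.symm
      (fun h => (anti (i+4) (i+1) (Or.inl (A41 i)) v hv4m u2 hu2) h)
      (fun h => (anti (i+2) (i+4) (Or.inl (A24 i)) u3 hu3 v hv4m) h.symm)
      hvb nau3 (fun h => nbu3 h.symm)
      (D (i+4) (i+1) (Ne.symm d14) v hv4m u2 hu2)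
      (D (i+4) (i+2) (Ne.symm d24) v hv4m u3 hu3)
      qvb qau3 qbu3.symm
  -- v is outside all the parts
  have cover : ∀ i j : Fin 5, j = i ∨ j = i+1 ∨ j = i+2 ∨ j = i+3 ∨ j = i+4 := by decide
  have hvout : ∀ j, v ∉ U j := by
    intro j
    rcases cover i j with rfl | rfl | rfl | rfl | rfl
    exacts [hvUi, hv1m, hv2m, hv3m, hv4m]
  -- apply the configuration lemma
  have run1 : ∀ x4 ∈ U (i+3),
      G.Adj v u2 ∧ G.Adj v u5 ∧ ¬G.Adj v u3 ∧ ¬G.Adj v x4 := by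
    intro x4 hx4
    exact config hbull hgem a b u2 u3 x4 u5 v eab eau2 eau5 ebu2 ebu5 e23u
      (hc3 x4 (Or.inl hx4)) ((hc5 x4 (Or.inr hx4)).symm) hva hvb nau3
      (anti i (i+3) (Or.inr rfl) a ha x4 hx4)
      nbu3 (anti i (i+3) (Or.inr rfl) b hb x4 hx4)
      (anti (i+1) (i+3) (Or.inl (A13 i)) u2 hu2 x4 hx4)
      n25u n35u qvb qau3
      (D i (i+3) d03 a ha x4 hx4) qbu3 (D i (i+3) d03 b hb x4 hx4)
      (D (i+1) (i+3) d13 u2 hu2 x4 hx4) q25u q35u qv2 qv3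
      (fun h => (anti i (i+3) (Or.inr rfl) a ha x4 hx4) (h ▸ hva).symm) qv5
  have run2 : ∀ x3 ∈ U (i+2), ¬G.Adj v x3 := by
    intro x3 hx3
    refine (config hbull hgem a b u2 x3 u4 u5 v eab eau2 eau5 ebu2 ebu5
      (hc2 x3 (Or.inl hx3)) ((hc4 x3 (Or.inr hx3)).symm) e45u hva hvb
      (anti i (i+2) (Or.inl rfl) a ha x3 hx3) nau4
      (anti i (i+2) (Or.inl rfl) b hb x3 hx3) nbu4
      n24u n25u (anti (i+2) (i+4) (Or.inl (A24 i)) x3 hx3 u5 hu5)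
      qvb (D i (i+2) d02 a ha x3 hx3) qau4
      (D i (i+2) d02 b hb x3 hx3) qbu4 q24u q25u
      (D (i+2) (i+4) d24 x3 hx3 u5 hu5) qv2
      (fun h => (anti i (i+2) (Or.inl rfl) a ha x3 hx3) (h ▸ hva).symm)
      qv4 qv5).2.2.1
  obtain ⟨hv2adj, hv5adj, -, -⟩ := run1 u4 hu4
  have hnot4 : ∀ y ∈ U (i+3), ¬G.Adj v y := fun y hy => (run1 y hy).2.2.2
  -- build the extension and contradict maximality
  set U' : Fin 5 → Set V := fun j => if j = i then insert v (U j) else U j with hU'def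
  have hsub : ∀ j, U j ⊆ U' j := by
    intro j x hx
    by_cases hji : j = i
    · subst hji; simp only [U', if_pos rfl]; exact Set.mem_insert_of_mem _ hx
    · simp only [U', if_neg hji]; exact hx
  have memU' : ∀ (z : V) (m : Fin 5), z ∈ U' m → (z = v ∧ m = i) ∨ z ∈ U m := by
    intro z m hm
    by_cases hmi : m = i
    · subst hmi
      simp only [U', if_pos rfl] at hm
      rcases hm with rfl | hm
      · exact Or.inl ⟨rfl, rfl⟩
      · exact Or.inr hm
    · simp only [U', if_neg hmi] at hm
      exact Or.inr hm
  have J1 : ∀ p q : Fin 5, p + 2 = q → p = q + 3 := by decide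
  have J2 : ∀ p q : Fin 5, p + 3 = q → p = q + 2 := by decide
  have hB : BlownUpC5 G U' := by
    refine ⟨?_, ?_, ?_⟩
    · intro j k hjk
      rw [Set.disjoint_left]
      intro x hxj hxk
      rcases memU' x j hxj with ⟨rfl, rfl⟩ | hxj'
      · rcases memU' x k hxk with ⟨-, rfl⟩ | hxk'
        · exact hjk rfl
        · exact hvout k hxk'
      · rcases memU' x k hxk with ⟨rfl, rfl⟩ | hxk'
        · exact hvout j hxj'
        · exact Set.disjoint_left.mp (hdisj j k hjk) hxj' hxk'
    · intro j x hx y hy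
      rcases memU' x j hx with ⟨rfl, rfl⟩ | hx'
      · rcases hy with hy | hy
        · rcases memU' y _ hy with ⟨rfl, -⟩ | hy'
          · exact fun h => G.irrefl h
          · exact run2 y hy'
        · rcases memU' y _ hy with ⟨rfl, -⟩ | hy'
          · exact fun h => G.irrefl h
          · exact hnot4 y hy'
      · rcases hy with hy | hy
        · rcases memU' y _ hy with ⟨rfl, hji⟩ | hy'
          · have hj : j = i + 3 := J1 j i hji
            subst hj
            exact fun h => hnot4 x hx' h.symm
          · exact hanti j x hx' y (Or.inl hy')
        · rcases memU' y _ hy with ⟨rfl, hji⟩ | hy'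
          · have hj : j = i + 2 := J2 j i hji
            subst hj
            exact fun h => run2 x hx' h.symm
          · exact hanti j x hx' y (Or.inr hy')
    · intro j
      rcases cover i j with rfl | rfl | rfl | rfl | rfl
      · obtain ⟨u1, hu1, hc1⟩ := hwit j
        refine ⟨u1, hsub j hu1, ?_⟩
        intro x hx
        have e1' : ∀ p : Fin 5, p + 1 ≠ p := by decide
        have e4' : ∀ p : Fin 5, p + 4 ≠ p := by decide
        simp only [U', if_neg (e1' j), if_neg (e4' j)] at hx
        exact hc1 x hx
      · refine ⟨u2, hsub _ hu2, ?_⟩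
        intro x hx
        simp only [I1, I2] at hx
        simp only [U', if_neg (Ne.symm (d02' i)), if_pos rfl] at hx
        rcases hx with hx | hx
        · exact hc2 x (Or.inl hx)
        · rcases hx with rfl | hx
          · exact hv2adj.symm
          · exact hc2 x (Or.inr hx)
      · refine ⟨u3, hsub _ hu3, ?_⟩
        intro x hx
        simp only [I3, I4] at hx
        have e1' : ∀ p : Fin 5, p + 1 ≠ p := by decide
        simp only [U', if_neg (Ne.symm (d03' i)), if_neg (e1' i)] at hx
        exact hc3 x hx
      · refine ⟨u4, hsub _ hu4, ?_⟩
        intro x hx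
        simp only [I5, I6] at hx
        have e4' : ∀ p : Fin 5, p + 4 ≠ p := by decide
        simp only [U', if_neg (e4' i), if_neg (Ne.symm (d02' i))] at hx
        exact hc4 x hx
      · refine ⟨u5, hsub _ hu5, ?_⟩
        intro x hx
        simp only [I7, I8] at hx
        simp only [U', if_pos rfl, if_neg (Ne.symm (d03' i))] at hx
        rcases hx with hx | hx
        · rcases hx with rfl | hx
          · exact hv5adj.symm
          · exact hc5 x (Or.inl hx)
        · exact hc5 x (Or.inr hx)
  have := hmax U' hsub hB
  have hvmem : v ∈ ⋃ j, U' j := by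
    refine Set.mem_iUnion.mpr ⟨i, ?_⟩
    simp only [U', if_pos rfl]
    exact Set.mem_insert _ _
  rw [this] at hvmem
  obtain ⟨j, hj⟩ := Set.mem_iUnion.mp hvmem
  exact hvout j hj

/-- Claim (4) in the proof of Theorem 3.1: in a prime `(P₆, bull, gem)`-free graph,
if `(U₁,…,U₅)` is as above with `U₁ ∪ ⋯ ∪ U₅` maximal, then each `Uᵢ` is stable. -/
theorem blownUpC5_parts_stable {V : Type*} [Fintype V] (G : SimpleGraph V)
    (hprime : IsPrime G)
    (hP6 : InducedFree (SimpleGraph.pathGraph 6) G)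
    (hbull : InducedFree bull G) (hgem : InducedFree gem G)
    (U : Fin 5 → Set V) (hU : BlownUpC5 G U)
    (hmax : ∀ U' : Fin 5 → Set V, (∀ i, U i ⊆ U' i) → BlownUpC5 G U' →
      (⋃ i, U' i) = (⋃ i, U i)) :
    ∀ i : Fin 5, ∀ a ∈ U i, ∀ b ∈ U i, ¬ G.Adj a b := by

  intro i a ha b hb hab
  have hkey := key_lemma G hbull hgem U hU hmax
  set R : V → V → Prop := fun x y => x ∈ U i ∧ y ∈ U i ∧ G.Adj x y with hR
  have hRsymm : Symmetric R := fun x y h => ⟨h.2.1, h.1, h.2.2.symm⟩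
  set C : Set V := {x | Relation.ReflTransGen R a x} with hC
  have haC : a ∈ C := Relation.ReflTransGen.refl
  have hbC : b ∈ C := Relation.ReflTransGen.single ⟨ha, hb, hab⟩
  have hCsub : C ⊆ U i := by
    intro x hx
    rcases (Relation.ReflTransGen.cases_tail hx) with rfl | ⟨y, _, hyx⟩
    · exact ha
    · exact hyx.2.1
  have hconn : ∀ x ∈ C, ∀ y ∈ C, Relation.ReflTransGen R x y := by
    intro x hx y hy
    exact Relation.ReflTransGen.trans (haveI : Std.Symm R := ⟨fun x y h => hRsymm h⟩; Std.Symm.symm (r := Relation.ReflTransGen R) _ _ hx) hy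
  have hhom : IsHomog G C := by
    intro v hvC
    by_cases hex : ∃ s ∈ C, G.Adj v s
    · left
      obtain ⟨s, hsC, hvs⟩ := hex
      have hvUi : v ∉ U i := by
        intro hvU
        exact hvC (Relation.ReflTransGen.tail hsC ⟨hCsub hsC, hvU, hvs.symm⟩)
      intro t htC
      have hst := hconn s hsC t htC
      clear htC
      induction hst with
      | refl => exact hvs
      | tail _ hbc ih => exact hkey i _ hbc.1 _ hbc.2.1 hbc.2.2 v hvUi ih
    · right
      intro s hsC hadj
      exact hex ⟨s, hsC, hadj⟩
  obtain ⟨u3, hu3, -⟩ := hU.2.2 (i+2)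
  apply hprime
  refine ⟨C, hhom, ?_, ?_⟩
  · have hsub2 : ({a, b} : Set V) ⊆ C := by
      intro x hx
      rcases hx with rfl | hx
      · exact haC
      · rw [Set.mem_singleton_iff] at hx; subst hx; exact hbC
    calc (2 : ℕ) = ({a, b} : Set V).ncard := (Set.ncard_pair hab.ne).symm
      _ ≤ C.ncard := Set.ncard_le_ncard hsub2 C.toFinite
  · intro hCuniv
    have hmem : u3 ∈ U i := hCsub (hCuniv ▸ Set.mem_univ u3)
    have d02 : ∀ j : Fin 5, j ≠ j + 2 := by decide
    exact Set.disjoint_left.mp (hU.1 i (i+2) (d02 i)) hmem hu3
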